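/- Let Ω ⊆ ℝⁿ be a nonempty closed convex set and let T : ℝⁿ ⇉ ℝⁿ be a set-valued map with nonempty, convex and compact values which is monotone, locally bounded and has closed graph. Then the strong solution set sol(T,Ω) of the generalized variational inequality GVI(T,Ω) is a convex set. -/

import Mathlib

open Set Filter
open scoped InnerProductSpace Topology

theorem minty_step1 {n : ℕ}
    (Ω : Set (EuclideanSpace ℝ (Fin n))) (hconv : Convex ℝ Ω)
    (T : EuclideanSpace ℝ (Fin n) → Set (EuclideanSpace ℝ (Fin n)))
    (hTne : ∀ x, (T x).Nonempty)
    (hlocbdd : ∀ x : EuclideanSpace ℝ (Fin n),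
      ∃ U ∈ nhds x, Bornology.IsBounded (⋃ y ∈ U, T y))
    (hgraph : IsClosed {p : (EuclideanSpace ℝ (Fin n)) × (EuclideanSpace ℝ (Fin n)) |
      p.2 ∈ T p.1})
    (xb : EuclideanSpace ℝ (Fin n)) (hxb : xb ∈ Ω)
    (H : ∀ y ∈ Ω, ∀ w ∈ T y, 0 ≤ ⟪w, y - xb⟫_ℝ)
    (y : EuclideanSpace ℝ (Fin n)) (hy : y ∈ Ω) :
    ∃ v ∈ T xb, 0 ≤ ⟪v, y - xb⟫_ℝ := by
  set t : ℕ → ℝ := fun k => 1 / (k + 1) with ht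
  have ht0 : ∀ k, 0 < t k := fun k => by positivity
  have ht1 : ∀ k, t k ≤ 1 := by
    intro k
    rw [ht]
    simp only [one_div]
    rw [inv_le_one_iff₀]
    right; exact le_add_of_nonneg_left (Nat.cast_nonneg k)
  set yk : ℕ → EuclideanSpace ℝ (Fin n) := fun k => xb + t k • (y - xb) with hyk
  have hykΩ : ∀ k, yk k ∈ Ω := by
    intro k
    have h := hconv hxb hy (a := 1 - t k) (b := t k) (by linarith [ht1 k])
      (le_of_lt (ht0 k)) (by ring)
    have he : (1 - t k) • xb + t k • y = xb + t k • (y - xb) := by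
      rw [smul_sub, sub_smul, one_smul]; abel
    rw [he] at h
    exact h
  have htend : Tendsto t atTop (𝓝 0) := tendsto_one_div_add_atTop_nhds_zero_nat
  have hyktend : Tendsto yk atTop (𝓝 xb) := by
    have : Tendsto yk atTop (𝓝 (xb + (0:ℝ) • (y - xb))) :=
      tendsto_const_nhds.add (htend.smul tendsto_const_nhds)
    simpa using this
  choose w hw using fun k => hTne (yk k)
  have hineq : ∀ k, 0 ≤ ⟪w k, y - xb⟫_ℝ := by
    intro k
    have h := H (yk k) (hykΩ k) (w k) (hw k)
    have he : yk k - xb = t k • (y - xb) := add_sub_cancel_left xb _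
    rw [he, real_inner_smul_right] at h
    nlinarith [ht0 k]
  obtain ⟨U, hU, hB⟩ := hlocbdd xb
  obtain ⟨N, hN⟩ := (eventually_atTop.1 (hyktend.eventually_mem hU))
  have hKc : IsCompact (closure (⋃ z ∈ U, T z)) := hB.isCompact_closure
  have hmem : ∀ k : ℕ, w (k + N) ∈ closure (⋃ z ∈ U, T z) := by
    intro k
    apply subset_closure
    exact mem_biUnion (hN (k + N) (Nat.le_add_left N k)) (hw (k + N))
  obtain ⟨v, hvK, φ, hφ, hwtend⟩ := hKc.tendsto_subseq hmem
  have hφtend : Tendsto (fun k => φ k + N) atTop atTop :=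
    tendsto_atTop_mono (fun k => le_trans hφ.le_apply (Nat.le_add_right _ _)) tendsto_id
  have hytend2 : Tendsto (fun k => yk (φ k + N)) atTop (𝓝 xb) := hyktend.comp hφtend
  have hvT : v ∈ T xb := by
    have hp : Tendsto (fun k => (yk (φ k + N), w (φ k + N))) atTop (𝓝 (xb, v)) :=
      hytend2.prodMk_nhds hwtend
    exact hgraph.mem_of_tendsto hp (Eventually.of_forall fun k => hw _)
  refine ⟨v, hvT, ?_⟩
  have : Tendsto (fun k => ⟪w (φ k + N), y - xb⟫_ℝ) atTop (𝓝 ⟪v, y - xb⟫_ℝ) :=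
    hwtend.inner tendsto_const_nhds
  exact ge_of_tendsto' this (fun k => hineq _)

theorem minty_main {n : ℕ}
    (Ω : Set (EuclideanSpace ℝ (Fin n)))
    (hne : Ω.Nonempty) (hconv : Convex ℝ Ω)
    (T : EuclideanSpace ℝ (Fin n) → Set (EuclideanSpace ℝ (Fin n)))
    (hTne : ∀ x, (T x).Nonempty)
    (hTconv : ∀ x, Convex ℝ (T x))
    (hTcpt : ∀ x, IsCompact (T x))
    (hlocbdd : ∀ x : EuclideanSpace ℝ (Fin n),
      ∃ U ∈ nhds x, Bornology.IsBounded (⋃ y ∈ U, T y))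
    (hgraph : IsClosed {p : (EuclideanSpace ℝ (Fin n)) × (EuclideanSpace ℝ (Fin n)) |
      p.2 ∈ T p.1})
    (xb : EuclideanSpace ℝ (Fin n)) (hxb : xb ∈ Ω)
    (H : ∀ y ∈ Ω, ∀ w ∈ T y, 0 ≤ ⟪w, y - xb⟫_ℝ) :
    ∃ v ∈ T xb, ∀ z ∈ Ω, 0 ≤ ⟪v, z - xb⟫_ℝ := by
  have step1 : ∀ y ∈ Ω, ∃ v ∈ T xb, 0 ≤ ⟪v, y - xb⟫_ℝ :=
    minty_step1 Ω hconv T hTne hlocbdd hgraph xb hxb H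
  by_contra hcon
  push_neg at hcon
  -- the set of "good" vectors
  set D : Set (EuclideanSpace ℝ (Fin n)) := {w | ∀ z ∈ Ω, 0 ≤ ⟪w, z - xb⟫_ℝ} with hD
  have hdisj : Disjoint (T xb) D := by
    rw [Set.disjoint_left]
    intro v hv hvD
    obtain ⟨z, hz, hlt⟩ := hcon v hv
    exact absurd (hvD z hz) (not_le.2 hlt)
  have hDconv : Convex ℝ D := by
    intro w1 hw1 w2 hw2 a b ha hb hab
    intro z hz
    rw [inner_add_left, real_inner_smul_left, real_inner_smul_left]
    have := hw1 z hz; have := hw2 z hz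
    positivity
  have hDclosed : IsClosed D := by
    have : D = ⋂ z ∈ Ω, {w : EuclideanSpace ℝ (Fin n) | 0 ≤ ⟪w, z - xb⟫_ℝ} := by
      ext w; simp [hD]
    rw [this]
    exact isClosed_biInter fun z _ =>
      isClosed_le continuous_const (continuous_id.inner continuous_const)
  obtain ⟨f, u, s, hfC, hus, hfD⟩ :=
    geometric_hahn_banach_compact_closed (hTconv xb) (hTcpt xb) hDconv hDclosed hdisj
  have h0D : (0 : EuclideanSpace ℝ (Fin n)) ∈ D := by
    intro z hz; simp
  have hs0 : s < 0 := by simpa using hfD 0 h0D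
  have hu0 : u < 0 := lt_trans hus hs0
  -- f is nonnegative on D (D is a cone)
  have hfD0 : ∀ w ∈ D, 0 ≤ f w := by
    intro w hwD
    by_contra hfw
    push_neg at hfw
    have hc : (0:ℝ) < 2 * s / f w := div_pos_of_neg_of_neg (by linarith) hfw
    have hcw : (2 * s / f w) • w ∈ D := by
      intro z hz
      rw [real_inner_smul_left]
      exact mul_nonneg (le_of_lt hc) (hwD z hz)
    have := hfD _ hcw
    rw [map_smul, smul_eq_mul, div_mul_cancel₀ _ (ne_of_lt hfw)] at this
    linarith
  -- Riesz representation
  set d := (InnerProductSpace.toDual ℝ (EuclideanSpace ℝ (Fin n))).symm f with hd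
  have hdval : ∀ x, ⟪d, x⟫_ℝ = f x := fun x => InnerProductSpace.toDual_symm_apply
  -- the cone over Ω - xb
  set S : Set (EuclideanSpace ℝ (Fin n)) :=
    {z | ∃ t : ℝ, 0 ≤ t ∧ ∃ p ∈ Ω, z = t • (p - xb)} with hS
  have hSconv : Convex ℝ S := by
    rintro z1 ⟨t1, ht1, p1, hp1, rfl⟩ z2 ⟨t2, ht2, p2, hp2, rfl⟩ a b ha hb hab
    rcases eq_or_lt_of_le (add_nonneg (mul_nonneg ha ht1) (mul_nonneg hb ht2)) with hτ | hτ
    · refine ⟨0, le_refl 0, hne.choose, hne.choose_spec, ?_⟩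
      have h1 : a * t1 = 0 := by nlinarith [mul_nonneg ha ht1, mul_nonneg hb ht2]
      have h2 : b * t2 = 0 := by nlinarith [mul_nonneg ha ht1, mul_nonneg hb ht2]
      rw [smul_smul, smul_smul, h1, h2]
      simp
    · set τ := a * t1 + b * t2 with hτdef
      have hτne : τ ≠ 0 := ne_of_gt hτ
      refine ⟨τ, le_of_lt hτ, (a * t1 / τ) • p1 + (b * t2 / τ) • p2, ?_, ?_⟩
      · exact hconv hp1 hp2 (div_nonneg (mul_nonneg ha ht1) (le_of_lt hτ))
          (div_nonneg (mul_nonneg hb ht2) (le_of_lt hτ))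
          (by field_simp; exact hτdef.symm)
      · have e1 : τ * (a * t1 / τ) = a * t1 := by field_simp
        have e2 : τ * (b * t2 / τ) = b * t2 := by field_simp
        have key : τ • ((a * t1 / τ) • p1 + (b * t2 / τ) • p2 - xb)
            = (a * t1) • p1 + (b * t2) • p2 - τ • xb := by
          rw [smul_sub, smul_add, smul_smul, smul_smul, e1, e2]
        rw [key, hτdef]
        module
  have hSsmul : ∀ (c : ℝ), 0 ≤ c → ∀ z ∈ S, c • z ∈ S := by
    rintro c hc z ⟨t, ht, p, hp, rfl⟩
    exact ⟨c * t, mul_nonneg hc ht, p, hp, smul_smul c t _⟩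
  have h0S : (0 : EuclideanSpace ℝ (Fin n)) ∈ S :=
    ⟨0, le_refl 0, hne.choose, hne.choose_spec, by simp⟩
  set K := closure S with hK
  have hKconv : Convex ℝ K := hSconv.closure
  have hKclosed : IsClosed K := isClosed_closure
  have hKne : K.Nonempty := ⟨0, subset_closure h0S⟩
  have hKsmul : ∀ (c : ℝ), 0 ≤ c → ∀ z ∈ K, c • z ∈ K := by
    intro c hc z hz
    exact map_mem_closure (continuous_const_smul c) hz (fun x hx => hSsmul c hc x hx)
  have hΩK : ∀ p ∈ Ω, p - xb ∈ K := by
    intro p hp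
    exact subset_closure ⟨1, zero_le_one, p, hp, (one_smul ℝ _).symm⟩
  -- d belongs to K
  have hdK : d ∈ K := by
    by_contra hdK
    obtain ⟨p, hpK, hpmin⟩ :=
      exists_norm_eq_iInf_of_complete_convex hKne hKclosed.isComplete hKconv d
    have hchar := (norm_eq_iInf_iff_real_inner_le_zero hKconv hpK).1 hpmin
    have h2p : (2:ℝ) • p ∈ K := hKsmul 2 (by norm_num) p hpK
    have h0K : (0 : EuclideanSpace ℝ (Fin n)) ∈ K := subset_closure h0S
    have e1 : ⟪d - p, p⟫_ℝ ≤ 0 := by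
      have := hchar _ h2p
      have h2 : (2:ℝ) • p - p = p := by
        rw [two_smul]; abel
      rwa [h2] at this
    have e2 : (0:ℝ) ≤ ⟪d - p, p⟫_ℝ := by
      have := hchar _ h0K
      rw [zero_sub, inner_neg_right] at this
      linarith
    have e3 : ⟪d - p, p⟫_ℝ = 0 := le_antisymm e1 e2
    have hKle : ∀ z ∈ K, ⟪d - p, z⟫_ℝ ≤ 0 := by
      intro z hz
      have := hchar z hz
      rw [inner_sub_right] at this
      linarith
    have hwD : p - d ∈ D := by
      intro z hz
      have := hKle (z - xb) (hΩK z hz)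
      rw [show p - d = -(d - p) by abel, inner_neg_left]
      linarith
    have hfw := hfD0 _ hwD
    rw [← hdval] at hfw
    have hcomp : ⟪d, p - d⟫_ℝ = -‖d - p‖^2 := by
      have h1 : ⟪d, p - d⟫_ℝ = ⟪d - p, p - d⟫_ℝ + ⟪p, p - d⟫_ℝ := by
        rw [← inner_add_left]; congr 1; abel
      have h2 : ⟪d - p, p - d⟫_ℝ = -‖d - p‖^2 := by
        rw [show p - d = -(d - p) by abel, inner_neg_right,
          real_inner_self_eq_norm_sq]
      have h3 : ⟪p, p - d⟫_ℝ = 0 := by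
        rw [show p - d = -(d - p) by abel, inner_neg_right,
          real_inner_comm, e3, neg_zero]
      rw [h1, h2, h3, add_zero]
    have hdp : d - p ≠ 0 := sub_ne_zero.2 (fun h => hdK (h ▸ hpK))
    have : (0:ℝ) < ‖d - p‖^2 := pow_pos (norm_pos_iff.mpr hdp) 2
    rw [hcomp] at hfw
    linarith
  -- bound on T xb
  obtain ⟨M, hM⟩ := (hTcpt xb).isBounded.exists_norm_le
  have hMpos : (0:ℝ) < M + 1 := by
    obtain ⟨v0, hv0⟩ := hTne xb
    have := norm_nonneg v0
    have := hM v0 hv0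
    linarith
  set ε := -u / (2 * (M + 1)) with hε
  have hεpos : 0 < ε := div_pos (by linarith) (by linarith)
  obtain ⟨z, hzS, hzd⟩ := Metric.mem_closure_iff.1 hdK ε hεpos
  obtain ⟨t, ht, p, hp, rfl⟩ := hzS
  obtain ⟨v, hvT, hvp⟩ := step1 p hp
  have h1 : (0:ℝ) ≤ ⟪v, t • (p - xb)⟫_ℝ := by
    rw [real_inner_smul_right]; exact mul_nonneg ht hvp
  have h2 : ⟪v, d⟫_ℝ < u := by rw [real_inner_comm, hdval]; exact hfC v hvT
  have h3 : ⟪v, t • (p - xb) - d⟫_ℝ ≤ (M + 1) * ε := by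
    calc ⟪v, t • (p - xb) - d⟫_ℝ ≤ ‖v‖ * ‖t • (p - xb) - d‖ := real_inner_le_norm _ _
    _ ≤ (M + 1) * ε := by
        apply mul_le_mul (by linarith [hM v hvT]) ?_ (norm_nonneg _) (by linarith)
        rw [← dist_eq_norm, dist_comm]
        exact le_of_lt hzd
  have h4 : ⟪v, t • (p - xb)⟫_ℝ = ⟪v, d⟫_ℝ + ⟪v, t • (p - xb) - d⟫_ℝ := by
    rw [← inner_add_right]; congr 1; abel
  have h5 : (M + 1) * ε = -u / 2 := by
    rw [hε]; field_simp
  rw [h4] at h1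
  rw [h5] at h3
  linarith


/-- If T is nonempty-, convex- and compact-valued, monotone, locally
bounded and has closed graph, then the strong solution set of GVI(T,Ω) is convex. -/
theorem gvi_strong_solution_set_convex {n : ℕ}
    (Ω : Set (EuclideanSpace ℝ (Fin n)))
    (hne : Ω.Nonempty) (hcl : IsClosed Ω) (hconv : Convex ℝ Ω)
    (T : EuclideanSpace ℝ (Fin n) → Set (EuclideanSpace ℝ (Fin n)))
    (hTne : ∀ x, (T x).Nonempty)
    (hTconv : ∀ x, Convex ℝ (T x))
    (hTcpt : ∀ x, IsCompact (T x))
    (hmono : ∀ x y v w, v ∈ T x → w ∈ T y → 0 ≤ ⟪v - w, x - y⟫_ℝ)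
    (hlocbdd : ∀ x : EuclideanSpace ℝ (Fin n),
      ∃ U ∈ nhds x, Bornology.IsBounded (⋃ y ∈ U, T y))
    (hgraph : IsClosed {p : (EuclideanSpace ℝ (Fin n)) × (EuclideanSpace ℝ (Fin n)) |
      p.2 ∈ T p.1}) :
    Convex ℝ {x : (EuclideanSpace ℝ (Fin n)) |
      x ∈ Ω ∧ ∃ v ∈ T x, ∀ z ∈ Ω, 0 ≤ ⟪v, z - x⟫_ℝ} := by
  intro x1 hx1 x2 hx2 a b ha hb hab
  obtain ⟨hx1Ω, v1, hv1, hs1⟩ := hx1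
  obtain ⟨hx2Ω, v2, hv2, hs2⟩ := hx2
  set xl := a • x1 + b • x2 with hxl
  have hxlΩ : xl ∈ Ω := hconv hx1Ω hx2Ω ha hb hab
  have H : ∀ y ∈ Ω, ∀ w ∈ T y, 0 ≤ ⟪w, y - xl⟫_ℝ := by
    intro y hy w hw
    have m1 : 0 ≤ ⟪w - v1, y - x1⟫_ℝ := hmono y x1 w v1 hw hv1
    have m2 : 0 ≤ ⟪w - v2, y - x2⟫_ℝ := hmono y x2 w v2 hw hv2
    have g1 : 0 ≤ ⟪w, y - x1⟫_ℝ := by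
      have := hs1 y hy
      rw [inner_sub_left] at m1; linarith
    have g2 : 0 ≤ ⟪w, y - x2⟫_ℝ := by
      have := hs2 y hy
      rw [inner_sub_left] at m2; linarith
    have he : y - xl = a • (y - x1) + b • (y - x2) := by
      have h1 : a • (y - x1) + b • (y - x2) = (a + b) • y - (a • x1 + b • x2) := by
        module
      rw [h1, hab, one_smul, hxl]
    rw [he, inner_add_right, real_inner_smul_right, real_inner_smul_right]
    have := mul_nonneg ha g1
    have := mul_nonneg hb g2
    linarith
  exact ⟨hxlΩ, minty_main Ω hne hconv T hTne hTconv hTcpt hlocbdd hgraph xl hxlΩ H⟩
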